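/- arXiv:1401.7289 — 2 statements merged into one kernel-verified Lean document; each statement's English description precedes it below -/
import Mathlib

section
/- For every integer l ≥ 3 and every z ∈ (0,1), the potential function of the (l,3,3) MacKay–Neal code evaluated along the parametrized family of non-trivial fixed points at x1 = z^{l-1} satisfies U(z^{l-1}, x2(z^{l-1}); ε(z^{l-1})) = U(z), where U(z) := -3z^l/l + (1-z)(1-4z^{l-1}) + (1-z)^{1/3}(1-z^{l-1})^{-2/3} - 2(1-z)^{2/3}(1-z^{l-1})^{5/3}. -/
open Real

/-- Potential function of the `(l,3,3)` MacKay–Neal code on BEC(ε). -/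
noncomputable def potMN (l : ℕ) (x1 x2 ε : ℝ) : ℝ :=
  1 - ε * (1 - (1-x1)^3 * (1-x2)^2)^3
    - (3 / (l:ℝ)) * (1 - (1-x1)^2 * (1-x2)^3)^l
    - (1-x1)^3 * (1-x2)^3
    - 3 * x1 * (1-x1)^2 * (1-x2)^3
    - 3 * x2 * (1-x1)^3 * (1-x2)^2

/-- `x2(x1)` parametrizing the non-trivial fixed points. -/
noncomputable def x2c (l : ℕ) (x1 : ℝ) : ℝ :=
  1 - ((1 - x1 ^ ((1:ℝ)/((l:ℝ)-1))) / (1-x1)^2) ^ ((1:ℝ)/3)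

/-- `ε(x1)` parametrizing the non-trivial fixed points. -/
noncomputable def epsc (l : ℕ) (x1 : ℝ) : ℝ :=
  x2c l x1 / (1 - (1-x1)^3 * (1 - x2c l x1)^2)^2

/-- `U(z)` of the `(l,3,3)` MN codes. -/
noncomputable def Uz (l : ℕ) (z : ℝ) : ℝ :=
  -(3 * z^l / (l:ℝ)) + (1-z) * (1 - 4 * z^(l-1))
    + (1-z) ^ ((1:ℝ)/3) * (1 - z^(l-1)) ^ (-(2:ℝ)/3)
    - 2 * (1-z) ^ ((2:ℝ)/3) * (1 - z^(l-1)) ^ ((5:ℝ)/3)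

/-- The potential function evaluated along the non-trivial fixed points at
`x1 = z^(l-1)` equals `U(z)`. -/
theorem stmt2 (l : ℕ) (hl : 3 ≤ l) (z : ℝ) (hz : z ∈ Set.Ioo (0:ℝ) 1) :
    potMN l (z^(l-1)) (x2c l (z^(l-1))) (epsc l (z^(l-1))) = Uz l z := by
  obtain ⟨hz0, hz1⟩ := hz
  have hx11 : z^(l-1) < 1 := pow_lt_one₀ hz0.le hz1 (by omega)
  have hx10 : 0 < z^(l-1) := pow_pos hz0 _
  have hw : (0:ℝ) < 1 - z^(l-1) := by linarith
  have hw1 : (1:ℝ) - z^(l-1) < 1 := by linarith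
  have hs : (0:ℝ) < 1 - z := by linarith
  have hs1 : (1:ℝ) - z < 1 := by linarith
  have hu : (0:ℝ) < (1 - z) / (1 - z^(l-1))^2 := by positivity
  have hcast : ((l:ℝ) - 1) = ((l-1 : ℕ) : ℝ) := by
    have h1 : (1:ℕ) ≤ l := by omega
    push_cast [Nat.cast_sub h1]; ring
  have hroot : (z^(l-1)) ^ ((1:ℝ)/((l:ℝ)-1)) = z := by
    rw [hcast, ← Real.rpow_natCast z (l-1), ← Real.rpow_mul hz0.le]
    rw [mul_one_div, div_self (Nat.cast_ne_zero.mpr (by omega)), Real.rpow_one]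
  simp only [potMN, Uz, x2c, epsc, hroot]
  set t := ((1 - z) / (1 - z^(l-1))^2) ^ ((1:ℝ)/3) with htdef
  have ht0 : 0 < t := Real.rpow_pos_of_pos hu _
  have cube : ∀ x : ℝ, 0 ≤ x → ∀ p : ℝ, (x^p)^(3:ℕ) = x^(p*3) := by
    intro x hx p
    rw [← Real.rpow_natCast (x^p) 3, ← Real.rpow_mul hx]
    norm_num
  have ht3 : (1 - z^(l-1))^2 * t^3 = 1 - z := by
    have h := cube _ hu.le ((1:ℝ)/3)
    norm_num at h
    rw [htdef, h]; field_simp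
  have e1 : (1-z) ^ ((1:ℝ)/3) * (1 - z^(l-1)) ^ (-(2:ℝ)/3) = t := by
    rw [← pow_left_inj₀ (by positivity) ht0.le (three_ne_zero)]
    have h1 := cube _ hs.le ((1:ℝ)/3)
    have h2 := cube _ hw.le (-(2:ℝ)/3)
    have h3 := cube _ hu.le ((1:ℝ)/3)
    rw [mul_pow, h1, h2, h3]
    norm_num
    rw [div_eq_mul_inv]
  have e2 : (1-z) ^ ((2:ℝ)/3) * (1 - z^(l-1)) ^ ((5:ℝ)/3) = (1 - z^(l-1))^3 * t^2 := by
    rw [← pow_left_inj₀ (by positivity) (by positivity) (three_ne_zero)]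
    have h1 := cube _ hs.le ((2:ℝ)/3)
    have h2 := cube _ hw.le ((5:ℝ)/3)
    have h3 := cube _ hu.le ((1:ℝ)/3)
    norm_num at h3
    rw [mul_pow, h1, h2, show (2/3*3 : ℝ) = ((2:ℕ):ℝ) by norm_num,
      show (5/3*3 : ℝ) = ((5:ℕ):ℝ) by norm_num, Real.rpow_natCast, Real.rpow_natCast]
    rw [show ((1 - z^(l-1))^3 * t^2)^3 = (1 - z^(l-1))^9 * (t^3)^2 from by ring,
      htdef, h3]
    rw [div_pow, ← mul_div_assoc, eq_div_iff (by positivity : (((1 - z^(l-1))^2)^2 : ℝ) ≠ 0)]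
    generalize (z^(l-1) : ℝ) = y
    ring
  have hBlt : (1 - z^(l-1))^3 * t^2 < 1 := by
    rw [← e2]
    have h1 : (1-z) ^ ((2:ℝ)/3) < 1 := Real.rpow_lt_one hs.le hs1 (by norm_num)
    have h2 : (1 - z^(l-1)) ^ ((5:ℝ)/3) < 1 := Real.rpow_lt_one hw.le hw1 (by norm_num)
    have h3 : (0:ℝ) ≤ (1-z) ^ ((2:ℝ)/3) := Real.rpow_nonneg hs.le _
    have h4 : (0:ℝ) ≤ (1 - z^(l-1)) ^ ((5:ℝ)/3) := Real.rpow_nonneg hw.le _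
    nlinarith
  simp only [sub_sub_cancel]
  have hE : 1 - (1 - z^(l-1))^2 * t^3 = z := by linarith
  rw [hE]
  have hdiv : (1 - t) / (1 - (1 - z^(l-1))^3 * t^2)^2 * (1 - (1 - z^(l-1))^3 * t^2)^3
      = (1 - t) * (1 - (1 - z^(l-1))^3 * t^2) := by
    have hAne : (1 - (1 - z^(l-1))^3 * t^2) ≠ 0 := by intro h; nlinarith
    field_simp
  rw [hdiv]
  generalize hy : (z^(l-1) : ℝ) = y at ht3 e1 e2 ⊢
  generalize (z^l : ℝ) = Z
  linear_combination (1 - 4*y) * ht3 - e1 + 2 * e2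
end

section
/- For all integers n ≥ 1 and l ≥ 2 and every z ∈ (0,1), z^n(1-z^{l-1})² ≤ (n/(n+2l-2))^{n/(l-1)} · ((2l-2)/(n+2l-2))² < ((2l-2)/(n+2l-2))². -/
open Real

lemma key_ineq (a : ℝ) (ha : 0 < a) (x : ℝ) (hx0 : 0 < x) (hx1 : x < 1) :
    x ^ a * (1 - x)^2 ≤ (a/(a+2)) ^ a * (2/(a+2))^2 := by
  have hs : 0 < a + 2 := by linarith
  set w₁ := a/(a+2) with hw1def
  set w₂ := 2/(a+2) with hw2def
  have hw₁ : 0 < w₁ := div_pos ha hs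
  have hw₂ : 0 < w₂ := div_pos two_pos hs
  have hsum : w₁ + w₂ = 1 := by rw [hw1def, hw2def]; field_simp
  have h1x : 0 ≤ 1 - x := by linarith
  have hgm := Real.geom_mean_le_arith_mean2_weighted hw₁.le hw₂.le
      (div_nonneg hx0.le hw₁.le) (div_nonneg h1x hw₂.le) hsum
  have harith : w₁ * (x/w₁) + w₂ * ((1-x)/w₂) = 1 := by
    field_simp
    ring
  rw [harith] at hgm
  have hdiv : (x/w₁)^w₁ * ((1-x)/w₂)^w₂
      = (x^w₁ * (1-x)^w₂) / (w₁^w₁ * w₂^w₂) := by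
    rw [Real.div_rpow hx0.le hw₁.le, Real.div_rpow h1x hw₂.le]
    ring
  rw [hdiv, div_le_one (by positivity)] at hgm
  -- hgm : x^w₁ * (1-x)^w₂ ≤ w₁^w₁ * w₂^w₂
  have hmain := Real.rpow_le_rpow (by positivity) hgm hs.le
  rw [Real.mul_rpow (by positivity) (by positivity),
      Real.mul_rpow (by positivity) (by positivity),
      ← Real.rpow_mul hx0.le, ← Real.rpow_mul h1x,
      ← Real.rpow_mul hw₁.le, ← Real.rpow_mul hw₂.le] at hmain
  have e1 : w₁ * (a + 2) = a := by rw [hw1def]; field_simp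
  have e2 : w₂ * (a + 2) = 2 := by rw [hw2def]; field_simp
  rw [e1, e2] at hmain
  calc x ^ a * (1 - x) ^ 2 = x ^ a * (1 - x) ^ (2:ℝ) := by
        rw [Real.rpow_two]
    _ ≤ w₁ ^ a * w₂ ^ (2:ℝ) := hmain
    _ = w₁ ^ a * w₂ ^ 2 := by rw [Real.rpow_two]

/-- For integers `n ≥ 1`, `l ≥ 2` and `z ∈ (0,1)`,
`z^n (1-z^{l-1})² ≤ (n/(n+2l-2))^{n/(l-1)} ((2l-2)/(n+2l-2))² < ((2l-2)/(n+2l-2))²`. -/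
theorem stmt11 (n l : ℕ) (hn : 1 ≤ n) (hl : 2 ≤ l) (z : ℝ)
    (hz : z ∈ Set.Ioo (0:ℝ) 1) :
    z^n * (1 - z^(l-1))^2
        ≤ ((n:ℝ)/((n:ℝ)+2*(l:ℝ)-2)) ^ ((n:ℝ)/((l:ℝ)-1))
            * ((2*(l:ℝ)-2)/((n:ℝ)+2*(l:ℝ)-2))^2 ∧
    ((n:ℝ)/((n:ℝ)+2*(l:ℝ)-2)) ^ ((n:ℝ)/((l:ℝ)-1))
        * ((2*(l:ℝ)-2)/((n:ℝ)+2*(l:ℝ)-2))^2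
      < ((2*(l:ℝ)-2)/((n:ℝ)+2*(l:ℝ)-2))^2 := by
  obtain ⟨hz0, hz1⟩ := hz
  have hl' : (2:ℝ) ≤ (l:ℝ) := by exact_mod_cast hl
  have hn' : (1:ℝ) ≤ (n:ℝ) := by exact_mod_cast hn
  have hm : (0:ℝ) < (l:ℝ) - 1 := by linarith
  have hcast : ((l-1:ℕ):ℝ) = (l:ℝ) - 1 := by
    push_cast [Nat.cast_sub (by omega : 1 ≤ l)]; ring
  have hs : (0:ℝ) < (n:ℝ) + 2*(l:ℝ) - 2 := by linarith
  have ha : (0:ℝ) < (n:ℝ)/((l:ℝ)-1) := div_pos (by linarith) hm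
  have hx0 : 0 < z^(l-1) := pow_pos hz0 _
  have hx1 : z^(l-1) < 1 := pow_lt_one₀ hz0.le hz1 (by omega)
  have hkey := key_ineq ((n:ℝ)/((l:ℝ)-1)) ha (z^(l-1)) hx0 hx1
  have hxa : (z^(l-1):ℝ) ^ ((n:ℝ)/((l:ℝ)-1)) = z^n := by
    rw [← Real.rpow_natCast z (l-1), ← Real.rpow_mul hz0.le, hcast]
    have h : ((l:ℝ)-1) * ((n:ℝ)/((l:ℝ)-1)) = ((n:ℕ):ℝ) := by
      field_simp
    rw [h, Real.rpow_natCast]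
  have hb1 : (n:ℝ)/((l:ℝ)-1)/((n:ℝ)/((l:ℝ)-1)+2) = (n:ℝ)/((n:ℝ)+2*(l:ℝ)-2) := by
    rw [div_eq_div_iff (by positivity : ((n:ℝ)/((l:ℝ)-1) + 2) ≠ 0) hs.ne']
    field_simp
    ring
  have hb2 : 2/((n:ℝ)/((l:ℝ)-1)+2) = (2*(l:ℝ)-2)/((n:ℝ)+2*(l:ℝ)-2) := by
    rw [div_eq_div_iff (by positivity : ((n:ℝ)/((l:ℝ)-1) + 2) ≠ 0) hs.ne']
    field_simp
    ring
  rw [hxa, hb1, hb2] at hkey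
  refine ⟨hkey, ?_⟩
  have hB : (0:ℝ) < ((2*(l:ℝ)-2)/((n:ℝ)+2*(l:ℝ)-2))^2 := by
    have h2 : (0:ℝ) < 2*(l:ℝ)-2 := by linarith
    positivity
  have hblt : (n:ℝ)/((n:ℝ)+2*(l:ℝ)-2) < 1 := by
    rw [div_lt_one hs]; linarith
  have hbpos : (0:ℝ) ≤ (n:ℝ)/((n:ℝ)+2*(l:ℝ)-2) := by positivity
  exact mul_lt_of_lt_one_left hB (Real.rpow_lt_one hbpos hblt ha)
end
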